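/- Swaps are not reversible under fees: if φ < 1, then for x > 0 and reserves r0, r1 > 0, letting α = φ·r1/(r0 + φ·x) be the swap rate of the forward swap, the reverse swap rate satisfies SX(α·x, r1 − α·x, r0 + x) < 1/α, i.e., swapping the received α·x output tokens back yields strictly less than the original x input tokens. -/

import Mathlib

theorem stmt19 (φ x r0 r1 : ℝ) (hφ0 : 0 < φ) (hφ1 : φ < 1)
    (hx : 0 < x) (hr0 : 0 < r0) (hr1 : 0 < r1) :
    let α := φ * r1 / (r0 + φ * x)
    φ * (r0 + x) / ((r1 - α * x) + φ * (α * x)) < 1 / α := by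
  intro α
  have hs : 0 < r0 + φ * x := by positivity
  have hα : 0 < α := by positivity
  have hαx : α * x < r1 := by
    rw [show α = φ * r1 / (r0 + φ * x) from rfl, div_mul_eq_mul_div, div_lt_iff₀ hs]
    nlinarith
  have hden : 0 < (r1 - α * x) + φ * (α * x) := by nlinarith [mul_pos hα hx]
  rw [div_lt_div_iff₀ hden hα, ← mul_lt_mul_iff_of_pos_right hs]
  have hαdef : α * (r0 + φ * x) = φ * r1 := by
    exact div_mul_cancel₀ (φ * r1) hs.ne'
  have hαdefx : α * x * (r0 + φ * x) = φ * r1 * x := by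
    rw [mul_right_comm, hαdef]
  nlinarith [hαdef, hαdefx, mul_pos hr0 hr1, mul_pos (mul_pos hr0 hr1) (sub_pos.mpr hφ1),
    mul_pos hφ0 (mul_pos (mul_pos hr0 hr1) (sub_pos.mpr hφ1))]
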